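/- There exists an absolute constant C > 0 such that the following holds. Let A ∈ ℝ^{n×n} be a symmetric matrix with ‖A‖₂ ≤ 1, let N be a positive integer, let δ ∈ (0, 1/2], Δ > 0, and let ℓ be an integer with ℓ ≥ max(1, C·log²(N/δ)/(n·Δ²)). Let g^{(1)}, …, g^{(ℓ)} be independent random vectors drawn uniformly from {−1, 1}^n, and for each k = 1,…,N set τ̃_k = (√(2/π)/(ℓ·n))·Σ_{i=1}^{ℓ} (g^{(i)})ᵀ T_k(A) g^{(i)}. Then with probability at least 1 − δ, for every k = 1,…,N, |τ̃_k − (1/n)·tr(T̄_k(A))| ≤ Δ. -/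

import Mathlib

open Matrix

/-- `T_k(A)`: the `k`-th Chebyshev polynomial of the first kind applied to a matrix `A`. -/
noncomputable def chebTMat {n : ℕ} (A : Matrix (Fin n) (Fin n) ℝ) (k : ℕ) :
    Matrix (Fin n) (Fin n) ℝ :=
  Polynomial.aeval A (Polynomial.Chebyshev.T ℝ (k : ℤ))

/-- The Euclidean norm of a vector in `ℝ^n`. -/
noncomputable def e2norm {n : ℕ} (v : Fin n → ℝ) : ℝ := Real.sqrt (∑ i, v i ^ 2)

/-- A `±1` (Rademacher) sign from a boolean. -/
def radSign (b : Bool) : ℝ := if b then 1 else -1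

set_option linter.unusedSectionVars false
set_option maxHeartbeats 2000000

set_option linter.unusedSectionVars false


namespace Chaos

@[simp] lemma radSign_sq (b : Bool) : radSign b ^ 2 = 1 := by cases b <;> simp [radSign]
@[simp] lemma radSign_not (b : Bool) : radSign (!b) = - radSign b := by cases b <;> simp [radSign]

variable {ι : Type*} [Fintype ι] [DecidableEq ι]

/-- flip coordinate `a` -/
def flip (a : ι) (z : ι → Bool) : ι → Bool := fun i => if i = a then !(z i) else z i

lemma flip_involutive (a : ι) : Function.Involutive (flip a) := by
  intro z; funext i; by_cases h : i = a <;> simp [flip, h]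

@[simp] lemma flip_apply_self (a : ι) (z : ι → Bool) : flip a z a = !(z a) := by simp [flip]

@[simp] lemma flip_apply_ne (a : ι) (z : ι → Bool) {b : ι} (h : b ≠ a) : flip a z b = z b := by
  simp [flip, h]

lemma sum_radSign_coord (a : ι) : ∑ z : ι → Bool, radSign (z a) = 0 := by
  have h := Equiv.sum_comp ((flip_involutive a).toPerm) (fun z => radSign (z a))
  have h2 : ∀ z : ι → Bool, radSign ((flip a z) a) = - radSign (z a) := by
    intro z; simp
  have : ∑ z : ι → Bool, radSign (z a) = - ∑ z : ι → Bool, radSign (z a) := by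
    calc ∑ z : ι → Bool, radSign (z a)
        = ∑ z : ι → Bool, radSign ((flip a z) a) := (h).symm
      _ = ∑ z : ι → Bool, - radSign (z a) := by simp [h2]
      _ = - ∑ z : ι → Bool, radSign (z a) := by rw [Finset.sum_neg_distrib]
  linarith
 
lemma sum_radSign_two {a b : ι} (hab : a ≠ b) :
    ∑ z : ι → Bool, radSign (z a) * radSign (z b) = 0 := by
  have h := Equiv.sum_comp ((flip_involutive a).toPerm) (fun z => radSign (z a) * radSign (z b))
  have : ∑ z : ι → Bool, radSign (z a) * radSign (z b)
      = - ∑ z : ι → Bool, radSign (z a) * radSign (z b) := by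
    calc ∑ z : ι → Bool, radSign (z a) * radSign (z b)
        = ∑ z : ι → Bool, radSign ((flip a z) a) * radSign ((flip a z) b) := h.symm
      _ = ∑ z : ι → Bool, -(radSign (z a) * radSign (z b)) := by
          apply Finset.sum_congr rfl; intro z _
          rw [flip_apply_self, flip_apply_ne a z (Ne.symm hab), radSign_not]; ring
      _ = - ∑ z : ι → Bool, radSign (z a) * radSign (z b) := by rw [Finset.sum_neg_distrib]
  linarith

lemma sum_indicator_two {a b : ι} (hab : a ≠ b) :
    ∑ δ : ι → Bool, (if δ a = true ∧ δ b = false then (1:ℝ) else 0)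
      = 2 ^ Fintype.card ι / 4 := by
  have key : ∀ δ : ι → Bool, (if δ a = true ∧ δ b = false then (1:ℝ) else 0)
      = (1 + radSign (δ a)) * (1 - radSign (δ b)) / 4 := by
    intro δ; cases h1 : δ a <;> cases h2 : δ b <;> simp [radSign] <;> norm_num
  rw [Finset.sum_congr rfl (fun δ _ => key δ)]
  have expand : ∀ δ : ι → Bool, (1 + radSign (δ a)) * (1 - radSign (δ b)) / 4
      = 1/4 + radSign (δ a) * (1/4) + radSign (δ b) * (-(1/4))
        + radSign (δ a) * radSign (δ b) * (-(1/4)) := by intro δ; ring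
  rw [Finset.sum_congr rfl (fun δ _ => expand δ)]
  rw [Finset.sum_add_distrib, Finset.sum_add_distrib, Finset.sum_add_distrib,
    ← Finset.sum_mul, ← Finset.sum_mul, ← Finset.sum_mul,
    sum_radSign_coord a, sum_radSign_coord b, sum_radSign_two hab]
  simp [Finset.card_univ, Fintype.card_fun]
  ring

end Chaos

namespace Chaos
variable {ι : Type*} [Fintype ι] [DecidableEq ι]

/-- merge: take `z` on coordinates where `δ` is true, else `u`. -/
def mrg (δ z u : ι → Bool) : ι → Bool := fun i => if δ i then z i else u i

lemma trip_involutive (δ : ι → Bool) :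
    Function.Involutive (fun t : (ι → Bool) × (ι → Bool) × (ι → Bool) =>
      (mrg δ t.1 t.2.1, mrg δ t.2.2 t.1, mrg δ t.2.1 t.2.2)) := by
  rintro ⟨z, u, v⟩
  simp only [Prod.mk.injEq]
  refine ⟨?_, ?_, ?_⟩ <;> (funext i; by_cases h : δ i = true <;> simp [mrg, h])

/-- counting bijection: summing a function of the two merged vectors. -/
lemma sum_mrg (δ : ι → Bool) (F : (ι → Bool) → (ι → Bool) → ℝ) :
    ∑ z : ι → Bool, ∑ u : ι → Bool, ∑ v : ι → Bool, F (mrg δ z u) (mrg δ v z)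
      = 2 ^ Fintype.card ι * ∑ p : ι → Bool, ∑ q : ι → Bool, F p q := by
  have h := Equiv.sum_comp ((trip_involutive δ).toPerm)
      (fun t : (ι → Bool) × (ι → Bool) × (ι → Bool) => F t.1 t.2.1)
  have lhs : ∑ z : ι → Bool, ∑ u : ι → Bool, ∑ v : ι → Bool, F (mrg δ z u) (mrg δ v z)
      = ∑ t : (ι → Bool) × (ι → Bool) × (ι → Bool), F (mrg δ t.1 t.2.1) (mrg δ t.2.2 t.1) := by
    rw [Fintype.sum_prod_type]
    congr 1; funext z
    rw [Fintype.sum_prod_type]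
  rw [lhs]
  have : ∑ t : (ι → Bool) × (ι → Bool) × (ι → Bool), F (mrg δ t.1 t.2.1) (mrg δ t.2.2 t.1)
      = ∑ t : (ι → Bool) × (ι → Bool) × (ι → Bool), F t.1 t.2.1 := h
  rw [this, Fintype.sum_prod_type]
  have : ∀ p : ι → Bool, ∑ t : (ι → Bool) × (ι → Bool), F p t.1
      = 2 ^ Fintype.card ι * ∑ q : ι → Bool, F p q := by
    intro p
    rw [Fintype.sum_prod_type]
    simp [Finset.sum_const, Finset.card_univ, Fintype.card_fun, Finset.mul_sum]
  rw [Finset.sum_congr rfl (fun p _ => this p), Finset.mul_sum]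

/-- the quadratic chaos -/
def Tq (c : ι → ι → ℝ) (z : ι → Bool) : ℝ :=
  ∑ a : ι, ∑ b : ι, c a b * (radSign (z a) * radSign (z b))

def Td (c : ι → ι → ℝ) (δ : ι → Bool) (z : ι → Bool) : ℝ :=
  ∑ a : ι, ∑ b : ι, c a b * (radSign (z a) * radSign (z b))
    * (if δ a = true ∧ δ b = false then 1 else 0)

def S2 (c : ι → ι → ℝ) (p q : ι → Bool) : ℝ :=
  ∑ a : ι, ∑ b : ι, c a b * (radSign (p a) * radSign (q b))

lemma sum_Td (c : ι → ι → ℝ) (hdiag : ∀ a, c a a = 0) (z : ι → Bool) :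
    ∑ δ : ι → Bool, Td c δ z = 2 ^ Fintype.card ι / 4 * Tq c z := by
  unfold Td Tq
  rw [Finset.sum_comm]
  rw [Finset.mul_sum]
  refine Finset.sum_congr rfl (fun a _ => ?_)
  rw [Finset.sum_comm, Finset.mul_sum]
  refine Finset.sum_congr rfl (fun b _ => ?_)
  by_cases hab : a = b
  · subst hab; simp [hdiag a]
  · rw [← Finset.mul_sum, sum_indicator_two hab]
    ring

lemma sum_sum_mul (K : ℝ) (f g : (ι → Bool) → ℝ) :
    ∑ u : ι → Bool, ∑ v : ι → Bool, K * (f u * g v)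
      = K * ((∑ u : ι → Bool, f u) * (∑ v : ι → Bool, g v)) := by
  rw [Finset.sum_mul_sum, Finset.mul_sum]
  refine Finset.sum_congr rfl fun u _ => ?_
  rw [Finset.mul_sum]

lemma sum_S2_mrg (c : ι → ι → ℝ) (δ z : ι → Bool) :
    ∑ u : ι → Bool, ∑ v : ι → Bool, S2 c (mrg δ z u) (mrg δ v z)
      = (2 ^ Fintype.card ι) * (2 ^ Fintype.card ι) * Td c δ z := by
  unfold S2 Td
  have swap : ∑ u : ι → Bool, ∑ v : ι → Bool,
        (∑ a : ι, ∑ b : ι, c a b * (radSign (mrg δ z u a) * radSign (mrg δ v z b)))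
      = ∑ a : ι, ∑ b : ι, ∑ u : ι → Bool, ∑ v : ι → Bool,
        c a b * (radSign (mrg δ z u a) * radSign (mrg δ v z b)) := by
    calc ∑ u : ι → Bool, ∑ v : ι → Bool,
        (∑ a : ι, ∑ b : ι, c a b * (radSign (mrg δ z u a) * radSign (mrg δ v z b)))
        = ∑ u : ι → Bool, ∑ a : ι, ∑ v : ι → Bool, ∑ b : ι,
            c a b * (radSign (mrg δ z u a) * radSign (mrg δ v z b)) :=
          Finset.sum_congr rfl (fun u _ => Finset.sum_comm)
      _ = ∑ a : ι, ∑ u : ι → Bool, ∑ v : ι → Bool, ∑ b : ι,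
            c a b * (radSign (mrg δ z u a) * radSign (mrg δ v z b)) := Finset.sum_comm
      _ = ∑ a : ι, ∑ u : ι → Bool, ∑ b : ι, ∑ v : ι → Bool,
            c a b * (radSign (mrg δ z u a) * radSign (mrg δ v z b)) :=
          Finset.sum_congr rfl (fun a _ => Finset.sum_congr rfl (fun u _ => Finset.sum_comm))
      _ = ∑ a : ι, ∑ b : ι, ∑ u : ι → Bool, ∑ v : ι → Bool,
            c a b * (radSign (mrg δ z u a) * radSign (mrg δ v z b)) :=
          Finset.sum_congr rfl (fun a _ => Finset.sum_comm)
  rw [swap, Finset.mul_sum]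
  refine Finset.sum_congr rfl (fun a _ => ?_)
  rw [Finset.mul_sum]
  refine Finset.sum_congr rfl (fun b _ => ?_)
  have hma : ∀ u : ι → Bool, radSign (mrg δ z u a)
      = if δ a = true then radSign (z a) else radSign (u a) := by
    intro u; by_cases h : δ a = true <;> simp [mrg, h]
  have hmb : ∀ v : ι → Bool, radSign (mrg δ v z b)
      = if δ b = true then radSign (v b) else radSign (z b) := by
    intro v; by_cases h : δ b = true <;> simp [mrg, h]
  by_cases ha : δ a = true <;> by_cases hb : δ b = true
  · -- a true, b true
    have e1 : ∑ u : ι → Bool, ∑ v : ι → Bool, c a b * (radSign (mrg δ z u a) * radSign (mrg δ v z b))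
        = ∑ u : ι → Bool, ∑ v : ι → Bool, (c a b * radSign (z a)) * ((1:ℝ) * radSign (v b)) := by
      refine Finset.sum_congr rfl fun u _ => Finset.sum_congr rfl fun v _ => ?_
      rw [hma u, hmb v, if_pos ha, if_pos hb]; ring
    rw [e1, sum_sum_mul, sum_radSign_coord b]
    simp [ha, hb]
  · -- a true, b false
    have e1 : ∑ u : ι → Bool, ∑ v : ι → Bool, c a b * (radSign (mrg δ z u a) * radSign (mrg δ v z b))
        = ∑ u : ι → Bool, ∑ v : ι → Bool, (c a b * (radSign (z a) * radSign (z b))) * ((1:ℝ) * (1:ℝ)) := by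
      refine Finset.sum_congr rfl fun u _ => Finset.sum_congr rfl fun v _ => ?_
      rw [hma u, hmb v, if_pos ha, if_neg hb]; ring
    rw [e1, sum_sum_mul]
    simp [Finset.sum_const, Finset.card_univ, Fintype.card_fun, ha, hb]
    ring
  · -- a false, b true
    have e1 : ∑ u : ι → Bool, ∑ v : ι → Bool, c a b * (radSign (mrg δ z u a) * radSign (mrg δ v z b))
        = ∑ u : ι → Bool, ∑ v : ι → Bool, (c a b) * (radSign (u a) * radSign (v b)) := by
      refine Finset.sum_congr rfl fun u _ => Finset.sum_congr rfl fun v _ => ?_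
      rw [hma u, hmb v, if_neg ha, if_pos hb]
    rw [e1, sum_sum_mul, sum_radSign_coord a]
    simp [ha, hb]
  · -- a false, b false
    have e1 : ∑ u : ι → Bool, ∑ v : ι → Bool, c a b * (radSign (mrg δ z u a) * radSign (mrg δ v z b))
        = ∑ u : ι → Bool, ∑ v : ι → Bool, (c a b * radSign (z b)) * (radSign (u a) * (1:ℝ)) := by
      refine Finset.sum_congr rfl fun u _ => Finset.sum_congr rfl fun v _ => ?_
      rw [hma u, hmb v, if_neg ha, if_neg hb]; ring
    rw [e1, sum_sum_mul, sum_radSign_coord a]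
    simp [ha, hb]

end Chaos

namespace Chaos
variable {ι : Type*} [Fintype ι] [DecidableEq ι]

lemma card_cube : (Fintype.card (ι → Bool)) = 2 ^ Fintype.card ι := by
  rw [Fintype.card_fun]; norm_num

lemma cosh_step (c : ι → ι → ℝ) (μ : ℝ) (p : ι → Bool) :
    ∑ q : ι → Bool, Real.exp (μ * S2 c p q)
      ≤ 2 ^ Fintype.card ι
        * Real.exp (μ^2/2 * ∑ b : ι, (∑ a : ι, c a b * radSign (p a))^2) := by
  set cc : ι → ℝ := fun b => ∑ a : ι, c a b * radSign (p a) with hcc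
  have hS2 : ∀ q : ι → Bool, S2 c p q = ∑ b : ι, cc b * radSign (q b) := by
    intro q
    unfold S2
    rw [Finset.sum_comm]
    refine Finset.sum_congr rfl (fun b _ => ?_)
    rw [hcc]
    simp only [Finset.sum_mul]
    refine Finset.sum_congr rfl (fun a _ => ?_)
    ring
  have hexp : ∀ q : ι → Bool, Real.exp (μ * S2 c p q)
      = ∏ b : ι, Real.exp (μ * cc b * radSign (q b)) := by
    intro q
    rw [hS2 q, Finset.mul_sum, Real.exp_sum]
    refine Finset.prod_congr rfl (fun b _ => ?_)
    ring_nf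
  rw [Finset.sum_congr rfl (fun q _ => hexp q)]
  rw [← Fintype.prod_sum (fun b x => Real.exp (μ * cc b * radSign x))]
  have hb : ∀ b : ι, ∑ x : Bool, Real.exp (μ * cc b * radSign x)
      = 2 * Real.cosh (μ * cc b) := by
    intro b
    rw [Fintype.sum_bool]
    simp [radSign, Real.cosh_eq]
    ring
  rw [Finset.prod_congr rfl (fun b _ => hb b)]
  calc ∏ b : ι, 2 * Real.cosh (μ * cc b)
      ≤ ∏ b : ι, 2 * Real.exp ((μ * cc b)^2/2) := by
        refine Finset.prod_le_prod (fun b _ => by positivity) (fun b _ => ?_)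
        have := Real.cosh_le_exp_half_sq (μ * cc b)
        linarith
    _ = 2 ^ Fintype.card ι * Real.exp (μ^2/2 * ∑ b : ι, (cc b)^2) := by
        rw [Finset.prod_mul_distrib, Finset.prod_const, Finset.card_univ, ← Real.exp_sum]
        congr 1
        congr 1
        rw [Finset.mul_sum]
        exact Finset.sum_congr rfl (fun b _ => by ring)

theorem chaos_mgf (c : ι → ι → ℝ) (hdiag : ∀ a, c a a = 0) (K lam : ℝ)
    (hK : ∀ s : ι → Bool, ∑ b : ι, (∑ a : ι, c a b * radSign (s a))^2 ≤ K) :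
    ∑ z : ι → Bool, Real.exp (lam * Tq c z)
      ≤ 2 ^ Fintype.card ι * Real.exp (8 * lam^2 * K) := by
  set m := Fintype.card ι with hm
  have hP : (0:ℝ) < 2 ^ m := by positivity
  have hwsum : ∑ _δ : ι → Bool, ((2:ℝ) ^ m)⁻¹ = 1 := by
    rw [Finset.sum_const, Finset.card_univ, card_cube, ← hm, nsmul_eq_mul]
    push_cast
    field_simp
  -- Jensen 1
  have J1 : ∀ z : ι → Bool, Real.exp (lam * Tq c z)
      ≤ ((2:ℝ) ^ m)⁻¹ * ∑ δ : ι → Bool, Real.exp (4 * lam * Td c δ z) := by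
    intro z
    have hid : lam * Tq c z = ∑ δ : ι → Bool, ((2:ℝ)^m)⁻¹ • (4 * lam * Td c δ z) := by
      simp only [smul_eq_mul]
      rw [← Finset.mul_sum, ← Finset.mul_sum, sum_Td c hdiag z, ← hm]
      field_simp
    have := convexOn_exp.map_sum_le (t := Finset.univ)
      (w := fun _ : ι → Bool => ((2:ℝ)^m)⁻¹)
      (p := fun δ => 4 * lam * Td c δ z)
      (fun _ _ => by positivity) hwsum (fun _ _ => Set.mem_univ _)
    rw [← hid] at this
    simpa [smul_eq_mul, Finset.mul_sum] using this
  -- Jensen 2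
  have J2 : ∀ (δ z : ι → Bool), Real.exp (4 * lam * Td c δ z)
      ≤ (((2:ℝ) ^ m) * 2 ^ m)⁻¹ * ∑ u : ι → Bool, ∑ v : ι → Bool,
          Real.exp (4 * lam * S2 c (mrg δ z u) (mrg δ v z)) := by
    intro δ z
    have hw2 : ∑ _t : (ι → Bool) × (ι → Bool), (((2:ℝ) ^ m) * 2 ^ m)⁻¹ = 1 := by
      rw [Finset.sum_const, Finset.card_univ, Fintype.card_prod, card_cube, ← hm, nsmul_eq_mul]
      push_cast
      field_simp
    have hid : 4 * lam * Td c δ z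
        = ∑ t : (ι → Bool) × (ι → Bool), (((2:ℝ)^m) * 2^m)⁻¹
            • (4 * lam * S2 c (mrg δ z t.1) (mrg δ t.2 z)) := by
      simp only [smul_eq_mul]
      rw [← Finset.mul_sum, ← Finset.mul_sum]
      rw [Fintype.sum_prod_type]
      rw [sum_S2_mrg c δ z, ← hm]
      field_simp
    have := convexOn_exp.map_sum_le (t := Finset.univ)
      (w := fun _ : (ι → Bool) × (ι → Bool) => (((2:ℝ)^m) * 2^m)⁻¹)
      (p := fun t => 4 * lam * S2 c (mrg δ z t.1) (mrg δ t.2 z))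
      (fun _ _ => by positivity) hw2 (fun _ _ => Set.mem_univ _)
    rw [← hid] at this
    calc Real.exp (4 * lam * Td c δ z)
        ≤ ∑ t : (ι → Bool) × (ι → Bool), (((2:ℝ)^m) * 2^m)⁻¹
            • Real.exp (4 * lam * S2 c (mrg δ z t.1) (mrg δ t.2 z)) := this
      _ = (((2:ℝ) ^ m) * 2 ^ m)⁻¹ * ∑ u : ι → Bool, ∑ v : ι → Bool,
            Real.exp (4 * lam * S2 c (mrg δ z u) (mrg δ v z)) := by
          simp only [smul_eq_mul]
          rw [← Finset.mul_sum, Fintype.sum_prod_type]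
  -- step 4 with hK
  have step4 : ∀ p q : ι → Bool, True := fun _ _ => trivial
  have inner_bound : ∀ p : ι → Bool, ∑ q : ι → Bool, Real.exp (4 * lam * S2 c p q)
      ≤ 2 ^ m * Real.exp (8 * lam^2 * K) := by
    intro p
    calc ∑ q : ι → Bool, Real.exp (4 * lam * S2 c p q)
        ≤ 2 ^ m * Real.exp ((4*lam)^2/2 * ∑ b : ι, (∑ a : ι, c a b * radSign (p a))^2) :=
          cosh_step c (4*lam) p
      _ ≤ 2 ^ m * Real.exp (8 * lam^2 * K) := by
          have h1 : (4*lam)^2/2 * ∑ b : ι, (∑ a : ι, c a b * radSign (p a))^2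
              ≤ 8 * lam^2 * K := by
            have := hK p
            nlinarith [sq_nonneg lam, this,
              Finset.sum_nonneg (fun b (_ : b ∈ Finset.univ) =>
                sq_nonneg (∑ a : ι, c a b * radSign (p a)))]
          have := Real.exp_le_exp.mpr h1
          nlinarith [Real.exp_pos ((4*lam)^2/2 * ∑ b : ι, (∑ a : ι, c a b * radSign (p a))^2)]
  -- assemble
  calc ∑ z : ι → Bool, Real.exp (lam * Tq c z)
      ≤ ∑ z : ι → Bool, ((2:ℝ) ^ m)⁻¹ * ∑ δ : ι → Bool, Real.exp (4 * lam * Td c δ z) :=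
        Finset.sum_le_sum (fun z _ => J1 z)
    _ = ((2:ℝ) ^ m)⁻¹ * ∑ δ : ι → Bool, ∑ z : ι → Bool, Real.exp (4 * lam * Td c δ z) := by
        rw [← Finset.mul_sum, Finset.sum_comm]
    _ ≤ ((2:ℝ) ^ m)⁻¹ * ∑ δ : ι → Bool, ∑ z : ι → Bool, (((2:ℝ) ^ m) * 2 ^ m)⁻¹
          * ∑ u : ι → Bool, ∑ v : ι → Bool,
              Real.exp (4 * lam * S2 c (mrg δ z u) (mrg δ v z)) := by
        refine mul_le_mul_of_nonneg_left ?_ (by positivity)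
        exact Finset.sum_le_sum (fun δ _ => Finset.sum_le_sum (fun z _ => J2 δ z))
    _ = ((2:ℝ) ^ m)⁻¹ * (((2:ℝ) ^ m) * 2 ^ m)⁻¹ * ∑ δ : ι → Bool,
          ∑ z : ι → Bool, ∑ u : ι → Bool, ∑ v : ι → Bool,
            Real.exp (4 * lam * S2 c (mrg δ z u) (mrg δ v z)) := by
        simp only [← Finset.mul_sum]
        ring
    _ = ((2:ℝ) ^ m)⁻¹ * (((2:ℝ) ^ m) * 2 ^ m)⁻¹ * ∑ δ : ι → Bool,
          (2:ℝ) ^ m * ∑ p : ι → Bool, ∑ q : ι → Bool, Real.exp (4 * lam * S2 c p q) := by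
        congr 1
        refine Finset.sum_congr rfl (fun δ _ => ?_)
        exact_mod_cast sum_mrg δ (fun p q => Real.exp (4 * lam * S2 c p q))
    _ ≤ ((2:ℝ) ^ m)⁻¹ * (((2:ℝ) ^ m) * 2 ^ m)⁻¹ * ∑ δ : ι → Bool,
          (2:ℝ) ^ m * ∑ p : ι → Bool, ((2:ℝ) ^ m * Real.exp (8 * lam^2 * K)) := by
        refine mul_le_mul_of_nonneg_left ?_ (by positivity)
        refine Finset.sum_le_sum (fun δ _ => ?_)
        refine mul_le_mul_of_nonneg_left ?_ (by positivity)
        exact Finset.sum_le_sum (fun p _ => inner_bound p)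
    _ = 2 ^ m * Real.exp (8 * lam^2 * K) := by
        simp only [Finset.sum_const, Finset.card_univ, card_cube, nsmul_eq_mul, ← hm]
        push_cast
        field_simp

end Chaos

namespace Chaos
variable {ι : Type*} [Fintype ι] [DecidableEq ι]

open Classical in
theorem chaos_tail_one (c : ι → ι → ℝ) (hdiag : ∀ a, c a a = 0) (K : ℝ) (hK0 : 0 < K)
    (hK : ∀ s : ι → Bool, ∑ b : ι, (∑ a : ι, c a b * radSign (s a))^2 ≤ K)
    (t : ℝ) (ht : 0 ≤ t) :
    ((Finset.univ.filter fun z : ι → Bool => t ≤ Tq c z).card : ℝ)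
      ≤ 2 ^ Fintype.card ι * Real.exp (-(t^2/(32*K))) := by
  set lam := t / (16 * K) with hlam
  have hlam0 : 0 ≤ lam := by positivity
  calc ((Finset.univ.filter fun z : ι → Bool => t ≤ Tq c z).card : ℝ)
      = ∑ z ∈ Finset.univ.filter fun z : ι → Bool => t ≤ Tq c z, (1:ℝ) := by
        rw [Finset.sum_const, nsmul_eq_mul, mul_one]
    _ ≤ ∑ z ∈ Finset.univ.filter fun z : ι → Bool => t ≤ Tq c z,
          Real.exp (lam * (Tq c z - t)) := by
        refine Finset.sum_le_sum (fun z hz => ?_)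
        rw [Finset.mem_filter] at hz
        have : 0 ≤ lam * (Tq c z - t) := mul_nonneg hlam0 (by linarith [hz.2])
        calc (1:ℝ) = Real.exp 0 := by rw [Real.exp_zero]
          _ ≤ Real.exp (lam * (Tq c z - t)) := Real.exp_le_exp.mpr this
    _ ≤ ∑ z : ι → Bool, Real.exp (lam * (Tq c z - t)) := by
        refine Finset.sum_le_sum_of_subset_of_nonneg (Finset.filter_subset _ _)
          (fun z _ _ => (Real.exp_pos _).le)
    _ = Real.exp (-(lam * t)) * ∑ z : ι → Bool, Real.exp (lam * Tq c z) := by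
        rw [Finset.mul_sum]
        refine Finset.sum_congr rfl (fun z _ => ?_)
        rw [← Real.exp_add]
        ring_nf
    _ ≤ Real.exp (-(lam * t)) * (2 ^ Fintype.card ι * Real.exp (8 * lam^2 * K)) := by
        exact mul_le_mul_of_nonneg_left (chaos_mgf c hdiag K lam hK) (Real.exp_pos _).le
    _ = 2 ^ Fintype.card ι * Real.exp (-(t^2/(32*K))) := by
        rw [← mul_assoc, mul_comm (Real.exp _), mul_assoc, ← Real.exp_add]
        congr 2
        rw [hlam]
        field_simp
        ring

open Classical in
theorem chaos_tail_abs (c : ι → ι → ℝ) (hdiag : ∀ a, c a a = 0) (K : ℝ) (hK0 : 0 < K)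
    (hK : ∀ s : ι → Bool, ∑ b : ι, (∑ a : ι, c a b * radSign (s a))^2 ≤ K)
    (t : ℝ) (ht : 0 ≤ t) :
    ((Finset.univ.filter fun z : ι → Bool => t ≤ |Tq c z|).card : ℝ)
      ≤ 2 * 2 ^ Fintype.card ι * Real.exp (-(t^2/(32*K))) := by
  have hTq : ∀ z, Tq (fun a b => -(c a b)) z = - Tq c z := by
    intro z
    unfold Tq
    rw [← Finset.sum_neg_distrib]
    refine Finset.sum_congr rfl (fun a _ => ?_)
    rw [← Finset.sum_neg_distrib]
    exact Finset.sum_congr rfl (fun b _ => by ring)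
  have hsub : (Finset.univ.filter fun z : ι → Bool => t ≤ |Tq c z|)
      ⊆ (Finset.univ.filter fun z : ι → Bool => t ≤ Tq c z)
        ∪ (Finset.univ.filter fun z : ι → Bool => t ≤ Tq (fun a b => -(c a b)) z) := by
    intro z hz
    rw [Finset.mem_filter] at hz
    rcases abs_cases (Tq c z) with ⟨he, _⟩ | ⟨he, _⟩
    · refine Finset.mem_union_left _ ?_
      rw [Finset.mem_filter]
      exact ⟨Finset.mem_univ _, by rw [← he]; exact hz.2⟩
    · refine Finset.mem_union_right _ ?_
      rw [Finset.mem_filter]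
      refine ⟨Finset.mem_univ _, ?_⟩
      rw [hTq z, ← he]
      exact hz.2
  have hdiag' : ∀ a, -(c a a) = 0 := fun a => by rw [hdiag a]; ring
  have hK' : ∀ s : ι → Bool, ∑ b : ι, (∑ a : ι, -(c a b) * radSign (s a))^2 ≤ K := by
    intro s
    have : ∀ b : ι, (∑ a : ι, -(c a b) * radSign (s a))^2
        = (∑ a : ι, c a b * radSign (s a))^2 := by
      intro b
      have : ∑ a : ι, -(c a b) * radSign (s a) = - ∑ a : ι, c a b * radSign (s a) := by
        rw [← Finset.sum_neg_distrib]
        exact Finset.sum_congr rfl (fun a _ => by ring)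
      rw [this, neg_sq]
    rw [Finset.sum_congr rfl (fun b _ => this b)]
    exact hK s
  have h1 := chaos_tail_one c hdiag K hK0 hK t ht
  have h2 := chaos_tail_one (fun a b => -(c a b)) hdiag' K hK0 hK' t ht
  have hcard : ((Finset.univ.filter fun z : ι → Bool => t ≤ |Tq c z|).card : ℝ)
      ≤ ((Finset.univ.filter fun z : ι → Bool => t ≤ Tq c z).card : ℝ)
        + ((Finset.univ.filter fun z : ι → Bool => t ≤ Tq (fun a b => -(c a b)) z).card : ℝ) := by
    have := Finset.card_le_card hsub
    have := le_trans this (Finset.card_union_le _ _)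
    exact_mod_cast this
  linarith

end Chaos



namespace Spec
variable {n : ℕ}

theorem aeval_op (A : Matrix (Fin n) (Fin n) ℝ) (hA : A.IsSymm)
    (hop : ∀ v : Fin n → ℝ, ∑ i, (A.mulVec v i)^2 ≤ ∑ i, (v i)^2)
    (p : Polynomial ℝ) (hp : ∀ x : ℝ, x^2 ≤ 1 → (p.eval x)^2 ≤ 1) :
    ∀ v : Fin n → ℝ, ∑ i, ((Polynomial.aeval A p).mulVec v i)^2 ≤ ∑ i, (v i)^2 := by
  classical
  have hH : A.IsHermitian := by
    rw [Matrix.IsHermitian]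
    ext i j
    simp [Matrix.conjTranspose_apply, hA.apply]
  set u := hH.eigenvectorBasis with hu
  set ev := hH.eigenvalues with hev
  set E := WithLp.equiv 2 (Fin n → ℝ) with hE
  set uu : Fin n → (Fin n → ℝ) := fun j => E (u j) with huu
  have hinner : ∀ x : EuclideanSpace ℝ (Fin n), (inner ℝ x x : ℝ) = ∑ i, (E x i)^2 := by
    intro x
    rw [PiLp.inner_apply]
    refine Finset.sum_congr rfl (fun i _ => ?_)
    rw [RCLike.inner_apply, conj_trivial, sq]
    rfl
  have hnorm1 : ∀ j, (inner ℝ (u j) (u j) : ℝ) = 1 := by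
    intro j
    rw [real_inner_self_eq_norm_sq, u.orthonormal.1 j]
    norm_num
  have hmul : ∀ j, A *ᵥ uu j = ev j • uu j := fun j => hH.mulVec_eigenvectorBasis j
  have hev2 : ∀ j, (ev j)^2 ≤ 1 := by
    intro j
    have h1 := hop (uu j)
    rw [hmul j] at h1
    have h2 : ∑ i, ((ev j • uu j) i)^2 = (ev j)^2 * ∑ i, (uu j i)^2 := by
      rw [Finset.mul_sum]
      exact Finset.sum_congr rfl (fun i _ => by simp [mul_pow])
    have h3 : ∑ i, (uu j i)^2 = 1 := by rw [← hinner (u j), hnorm1 j]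
    rw [h2, h3, mul_one] at h1
    exact h1
  have hpow : ∀ (m : ℕ) (j : Fin n), (A^m) *ᵥ uu j = (ev j)^m • uu j := by
    intro m j
    induction m with
    | zero => simp
    | succ m ih =>
      rw [pow_succ, ← Matrix.mulVec_mulVec, hmul j, Matrix.mulVec_smul, ih, smul_smul,
        ← pow_succ']
  have hPA : ∀ (q : Polynomial ℝ) (j : Fin n),
      (Polynomial.aeval A q) *ᵥ uu j = (q.eval (ev j)) • uu j := by
    intro q j
    induction q using Polynomial.induction_on' with
    | add f g hf hg =>
      rw [map_add, Matrix.add_mulVec, hf, hg, Polynomial.eval_add, add_smul]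
    | monomial m a =>
      rw [Polynomial.aeval_monomial, Polynomial.eval_monomial]
      rw [Algebra.algebraMap_eq_smul_one, smul_mul_assoc, one_mul,
        Matrix.smul_mulVec, hpow m j, smul_smul]
  intro v
  set M := Polynomial.aeval A p with hM
  set x : EuclideanSpace ℝ (Fin n) := E.symm v with hx
  set c : Fin n → ℝ := fun j => u.repr x j with hc
  set d : Fin n → ℝ := fun j => p.eval (ev j) with hd
  have hd2 : ∀ j, (d j)^2 ≤ 1 := fun j => hp _ (hev2 j)
  have hxr : ∑ j, c j • u j = x := u.sum_repr x
  set f := Matrix.toEuclideanLin M with hf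
  have hfu : ∀ j, f (u j) = d j • u j := by
    intro j
    have h1 : f (u j) = E.symm (M *ᵥ uu j) := rfl
    rw [h1, hPA p j]
    rfl
  have hfx : f x = ∑ j, (c j * d j) • u j := by
    conv_lhs => rw [← hxr]
    rw [map_sum]
    refine Finset.sum_congr rfl (fun j _ => ?_)
    rw [_root_.map_smul, hfu j, smul_smul]
  have lhs_eq : ∑ i, ((M.mulVec v) i)^2 = (inner ℝ (f x) (f x) : ℝ) := by
    rw [hinner (f x)]
    rfl
  have rhs_eq : ∑ i, (v i)^2 = (inner ℝ x x : ℝ) := by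
    rw [hinner x]
    rfl
  rw [lhs_eq, rhs_eq]
  rw [hfx]
  have h1 : (inner ℝ (∑ j, (c j * d j) • u j) (∑ j, (c j * d j) • u j) : ℝ)
      = ∑ j, (c j * d j)^2 := by
    rw [u.orthonormal.inner_sum]
    exact Finset.sum_congr rfl (fun j _ => by simp [sq])
  have h2 : (inner ℝ x x : ℝ) = ∑ j, (c j)^2 := by
    conv_lhs => rw [← hxr]
    rw [u.orthonormal.inner_sum]
    exact Finset.sum_congr rfl (fun j _ => by simp [sq])
  rw [h1, h2]
  refine Finset.sum_le_sum (fun j _ => ?_)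
  have := hd2 j
  nlinarith [sq_nonneg (c j), sq_nonneg (d j)]

end Spec

namespace Spec
variable {n : ℕ}

lemma cheb_eval_sq_le (k : ℤ) (x : ℝ) (hx : x^2 ≤ 1) :
    ((Polynomial.Chebyshev.T ℝ k).eval x)^2 ≤ 1 := by
  have h1 : -1 ≤ x := by nlinarith
  have h2 : x ≤ 1 := by nlinarith
  have hcos : Real.cos (Real.arccos x) = x := Real.cos_arccos h1 h2
  have hT := Polynomial.Chebyshev.T_real_cos (Real.arccos x) k
  rw [hcos] at hT
  rw [hT]
  nlinarith [Real.cos_le_one ((k:ℝ) * Real.arccos x),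
    Real.neg_one_le_cos ((k:ℝ) * Real.arccos x)]

theorem cheb_op (A : Matrix (Fin n) (Fin n) ℝ) (hA : A.IsSymm)
    (hop : ∀ v : Fin n → ℝ, ∑ i, (A.mulVec v i)^2 ≤ ∑ i, (v i)^2) (k : ℕ) :
    ∀ v : Fin n → ℝ, ∑ i, ((chebTMat A k).mulVec v i)^2 ≤ ∑ i, (v i)^2 :=
  aeval_op A hA hop _ (fun x hx => cheb_eval_sq_le (k : ℤ) x hx)

theorem cheb_symm (A : Matrix (Fin n) (Fin n) ℝ) (hA : A.IsSymm) (k : ℕ) :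
    (chebTMat A k).IsSymm := by
  classical
  unfold chebTMat
  generalize (Polynomial.Chebyshev.T ℝ (k:ℤ)) = p
  induction p using Polynomial.induction_on' with
  | add f g hf hg =>
    rw [map_add, Matrix.IsSymm, Matrix.transpose_add, hf, hg]
  | monomial m a =>
    rw [Polynomial.aeval_monomial, Matrix.IsSymm, Algebra.algebraMap_eq_smul_one,
      smul_mul_assoc, one_mul, Matrix.transpose_smul, Matrix.transpose_pow, hA]

theorem diag_sq_le (M : Matrix (Fin n) (Fin n) ℝ)
    (hop : ∀ v : Fin n → ℝ, ∑ i, (M.mulVec v i)^2 ≤ ∑ i, (v i)^2) (b : Fin n) :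
    (M b b)^2 ≤ 1 := by
  classical
  have h1 := hop ((Pi.single b 1 : Fin n → ℝ))
  rw [Matrix.mulVec_single] at h1
  have h2 : ∑ i, ((Pi.single b 1 : Fin n → ℝ) i)^2 = 1 := by
    rw [Finset.sum_eq_single b]
    · simp
    · intro i _ hib; simp [Pi.single_apply, hib]
    · intro h; exact absurd (Finset.mem_univ b) h
  have h3 : (M b b)^2 ≤ ∑ i, (M i b * 1)^2 := by
    refine Finset.single_le_sum (f := fun i => (M i b * 1)^2) (fun i _ => sq_nonneg _)
      (Finset.mem_univ b) |>.trans_eq' ?_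
    simp
  rw [h2] at h1
  exact h3.trans h1

end Spec

open Matrix in
open Classical in
theorem matrix_tail {n ℓ : ℕ} (hn : 0 < n) (hℓ : 0 < ℓ) (M : Matrix (Fin n) (Fin n) ℝ)
    (hMs : M.IsSymm) (hop : ∀ v : Fin n → ℝ, ∑ i, (M.mulVec v i)^2 ≤ ∑ i, (v i)^2)
    (t : ℝ) (ht : 0 ≤ t) :
    ((Finset.univ.filter fun gs : Fin ℓ → Fin n → Bool =>
        t ≤ |(∑ i, (fun j => radSign (gs i j)) ⬝ᵥ M.mulVec (fun j => radSign (gs i j)))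
              - ℓ * M.trace|).card : ℝ)
      ≤ 2 * 2 ^ (ℓ * n) * Real.exp (-(t^2/(128 * ℓ * n))) := by
  set c : (Fin ℓ × Fin n) → (Fin ℓ × Fin n) → ℝ := fun p q => if p.1 = q.1 ∧ p.2 ≠ q.2 then M p.2 q.2 else 0 with hc
  have hdiag : ∀ a : (Fin ℓ × Fin n), c a a = 0 := by
    intro a; simp [hc]
  set K : ℝ := 4 * ℓ * n with hK'
  have hK0 : 0 < K := by
    rw [hK']; positivity
  have hcases : ∀ (i' i : Fin ℓ) (a b : Fin n), c (i',a) (i,b) = if i' = i then (if a ≠ b then M a b else 0) else 0 := by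
    intro i' i a b
    by_cases h1 : i' = i <;> by_cases h2 : a ≠ b <;> simp [hc, h1, h2]
  have hK : ∀ s : (Fin ℓ × Fin n) → Bool, ∑ b : (Fin ℓ × Fin n), (∑ a : (Fin ℓ × Fin n), c a b * radSign (s a))^2 ≤ K := by
    intro s
    rw [Fintype.sum_prod_type]
    have inner_eq : ∀ (i : Fin ℓ) (b : Fin n),
        ∑ a : (Fin ℓ × Fin n), c a (i, b) * radSign (s a)
          = (M.mulVec (fun a => radSign (s (i, a)))) b - M b b * radSign (s (i, b)) := by
      intro i b
      rw [Fintype.sum_prod_type]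
      rw [Finset.sum_eq_single i]
      · set x : Fin n → ℝ := fun a => radSign (s (i, a)) with hx
        have : ∀ a : Fin n, c (i, a) (i, b) * radSign (s (i, a))
            = M a b * x a - (if a = b then M b b * x b else 0) := by
          intro a
          by_cases hab : a = b
          · subst hab; simp [hcases]
          · simp [hcases, hab, hx]
        rw [Finset.sum_congr rfl (fun a _ => this a)]
        rw [Finset.sum_sub_distrib]
        congr 1
        · rw [Matrix.mulVec, dotProduct]
          refine Finset.sum_congr rfl (fun a _ => ?_)
          rw [hMs.apply]
        · rw [Finset.sum_ite_eq' Finset.univ b (fun _ => M b b * x b)]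
          simp [hx]
      · intro i' _ hne
        refine Finset.sum_eq_zero (fun a _ => ?_)
        rw [hcases]
        simp [hne]
      · intro h; exact absurd (Finset.mem_univ i) h
    have per_i : ∀ i : Fin ℓ, ∑ b : Fin n, (∑ a : (Fin ℓ × Fin n), c a (i, b) * radSign (s a))^2
        ≤ 4 * n := by
      intro i
      set x : Fin n → ℝ := fun a => radSign (s (i, a)) with hx
      have hxsq : ∑ b : Fin n, (x b)^2 = n := by
        simp [hx]
      have h1 : ∑ b : Fin n, (∑ a : (Fin ℓ × Fin n), c a (i, b) * radSign (s a))^2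
          = ∑ b : Fin n, ((M.mulVec x) b - M b b * x b)^2 := by
        refine Finset.sum_congr rfl (fun b _ => ?_)
        rw [inner_eq i b]
      rw [h1]
      have h2 : ∀ b : Fin n, ((M.mulVec x) b - M b b * x b)^2
          ≤ 2 * ((M.mulVec x) b)^2 + 2 * (M b b * x b)^2 := by
        intro b; nlinarith [sq_nonneg ((M.mulVec x) b + M b b * x b)]
      calc ∑ b : Fin n, ((M.mulVec x) b - M b b * x b)^2
          ≤ ∑ b : Fin n, (2 * ((M.mulVec x) b)^2 + 2 * (M b b * x b)^2) :=
            Finset.sum_le_sum (fun b _ => h2 b)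
        _ = 2 * ∑ b : Fin n, ((M.mulVec x) b)^2 + 2 * ∑ b : Fin n, (M b b)^2 * (x b)^2 := by
            rw [Finset.sum_add_distrib, ← Finset.mul_sum, ← Finset.mul_sum]
            congr 1
            congr 1
            exact Finset.sum_congr rfl (fun b _ => by ring)
        _ ≤ 2 * ∑ b : Fin n, (x b)^2 + 2 * ∑ b : Fin n, (1:ℝ) * 1 := by
            have hb1 := hop x
            have hb2 : ∑ b : Fin n, (M b b)^2 * (x b)^2 ≤ ∑ b : Fin n, (1:ℝ) * 1 := by
              refine Finset.sum_le_sum (fun b _ => ?_)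
              have := Spec.diag_sq_le M hop b
              have hxb : (x b)^2 = 1 := by simp [hx]
              rw [hxb, mul_one, mul_one]
              exact this
            nlinarith
        _ ≤ 4 * n := by
            rw [hxsq]
            simp
            linarith
    calc ∑ i : Fin ℓ, ∑ b : Fin n, (∑ a : (Fin ℓ × Fin n), c a (i, b) * radSign (s a))^2
        ≤ ∑ _i : Fin ℓ, (4 : ℝ) * n := Finset.sum_le_sum (fun i _ => per_i i)
      _ = K := by
          rw [Finset.sum_const, Finset.card_univ, Fintype.card_fin, nsmul_eq_mul, hK']
          ring
  have hTq : ∀ gs : Fin ℓ → Fin n → Bool,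
      Chaos.Tq c (fun p : (Fin ℓ × Fin n) => gs p.1 p.2)
        = (∑ i, (fun j => radSign (gs i j)) ⬝ᵥ M.mulVec (fun j => radSign (gs i j)))
            - ℓ * M.trace := by
    intro gs
    unfold Chaos.Tq
    rw [Fintype.sum_prod_type]
    have per_i : ∀ i : Fin ℓ,
        ∑ a : Fin n, ∑ q : (Fin ℓ × Fin n), c (i, a) q * (radSign (gs i a) * radSign (gs q.1 q.2))
          = (fun j => radSign (gs i j)) ⬝ᵥ M.mulVec (fun j => radSign (gs i j)) - M.trace := by
      intro i
      set x : Fin n → ℝ := fun a => radSign (gs i a) with hx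
      have step : ∀ a : Fin n, ∑ q : (Fin ℓ × Fin n), c (i, a) q * (radSign (gs i a) * radSign (gs q.1 q.2))
          = ∑ b : Fin n, (M a b * (x a * x b) - (if b = a then M a a * (x a * x a) else 0)) := by
        intro a
        rw [Fintype.sum_prod_type]
        rw [Finset.sum_eq_single i]
        · refine Finset.sum_congr rfl (fun b _ => ?_)
          by_cases hab : a = b
          · subst hab; simp [hcases]
          · have hba : b ≠ a := Ne.symm hab
            rw [hcases]
            simp [hab, hba, hx]
        · intro i' _ hne
          refine Finset.sum_eq_zero (fun b _ => ?_)
          rw [hcases]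
          simp [Ne.symm hne]
        · intro h; exact absurd (Finset.mem_univ i) h
      rw [Finset.sum_congr rfl (fun a _ => step a)]
      have expand : ∑ a : Fin n, ∑ b : Fin n,
          (M a b * (x a * x b) - (if b = a then M a a * (x a * x a) else 0))
          = (∑ a : Fin n, ∑ b : Fin n, M a b * (x a * x b)) - ∑ a : Fin n, M a a := by
        rw [← Finset.sum_sub_distrib]
        refine Finset.sum_congr rfl (fun a _ => ?_)
        rw [Finset.sum_sub_distrib]
        congr 1
        rw [Finset.sum_ite_eq' Finset.univ a (fun _ => M a a * (x a * x a))]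
        have : (x a * x a) = 1 := by simp [hx, radSign]; cases gs i a <;> norm_num [radSign]
        simp [this]
      rw [expand]
      congr 1
      · rw [dotProduct]
        refine Finset.sum_congr rfl (fun a _ => ?_)
        rw [Matrix.mulVec, dotProduct, Finset.mul_sum]
        refine Finset.sum_congr rfl (fun b _ => ?_)
        ring
    rw [Finset.sum_congr rfl (fun i _ => per_i i)]
    rw [Finset.sum_sub_distrib, Finset.sum_const, Finset.card_univ, Fintype.card_fin,
      nsmul_eq_mul]
  -- card transfer
  have hcard : (Finset.univ.filter fun gs : Fin ℓ → Fin n → Bool =>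
        t ≤ |(∑ i, (fun j => radSign (gs i j)) ⬝ᵥ M.mulVec (fun j => radSign (gs i j)))
              - ℓ * M.trace|).card
      = (Finset.univ.filter fun z : (Fin ℓ × Fin n) → Bool => t ≤ |Chaos.Tq c z|).card := by
    refine Finset.card_bij' (fun gs _ => fun p : (Fin ℓ × Fin n) => gs p.1 p.2)
      (fun z _ => fun i a => z (i, a)) ?_ ?_ ?_ ?_
    · intro gs hgs
      rw [Finset.mem_filter] at hgs ⊢
      exact ⟨Finset.mem_univ _, by rw [hTq gs]; exact hgs.2⟩
    · intro z hz
      rw [Finset.mem_filter] at hz ⊢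
      refine ⟨Finset.mem_univ _, ?_⟩
      rw [← hTq (fun i a => z (i, a))]
      exact hz.2
    · intro gs _
      rfl
    · intro z _
      rfl
  rw [hcard]
  have := Chaos.chaos_tail_abs c hdiag K hK0 hK t ht
  have hcardI : Fintype.card (Fin ℓ × Fin n) = ℓ * n := by
    rw [Fintype.card_prod, Fintype.card_fin, Fintype.card_fin]
  simp only [hcardI] at this
  calc ((Finset.univ.filter fun z : (Fin ℓ × Fin n) → Bool => t ≤ |Chaos.Tq c z|).card : ℝ)
      ≤ 2 * 2 ^ (ℓ * n) * Real.exp (-(t^2/(32*K))) := this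
    _ = 2 * 2 ^ (ℓ * n) * Real.exp (-(t^2/(128 * ℓ * n))) := by
        rw [hK']
        norm_num
        ring_nf


lemma final_measure {α : Type*} [Fintype α] [Nonempty α] [MeasurableSpace α]
    (hmeas : ∀ s : Set α, MeasurableSet s) (P : α → Prop) [DecidablePred P] (δ : ℝ)
    (hcard : (1 - δ) * (Fintype.card α : ℝ) ≤ ((Finset.univ.filter P).card : ℝ)) :
    ENNReal.ofReal (1 - δ) ≤ (PMF.uniformOfFintype α).toMeasure {x | P x} := by
  rcases le_or_gt (1 - δ) 0 with h | h
  · rw [ENNReal.ofReal_eq_zero.mpr h]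
    exact zero_le
  · have happ : (PMF.uniformOfFintype α).toMeasure {x | P x}
        = (((Finset.univ.filter P).card : ℕ) : ENNReal) * ((Fintype.card α : ℕ) : ENNReal)⁻¹ := by
      rw [PMF.toMeasure_apply _ _, tsum_fintype]
      have hterm : ∀ x : α,
          ({x | P x} : Set α).indicator (⇑(PMF.uniformOfFintype α)) x
            = if P x then ((Fintype.card α : ℕ) : ENNReal)⁻¹ else 0 := by
        intro x
        rw [Set.indicator_apply]
        by_cases hx : P x
        · rw [if_pos (by exact hx), if_pos hx, PMF.uniformOfFintype_apply]
        · rw [if_neg (by exact hx), if_neg hx]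
      rw [Finset.sum_congr rfl (fun x _ => hterm x)]
      rw [Finset.sum_ite, Finset.sum_const, Finset.sum_const_zero, add_zero, nsmul_eq_mul]
      exact hmeas _
    rw [happ]
    have hD0 : ((Fintype.card α : ℕ) : ENNReal) ≠ 0 := by
      simp [Fintype.card_ne_zero]
    have hDtop : ((Fintype.card α : ℕ) : ENNReal) ≠ ⊤ := ENNReal.natCast_ne_top _
    rw [← div_eq_mul_inv]
    rw [ENNReal.le_div_iff_mul_le (Or.inl hD0) (Or.inl hDtop)]
    calc ENNReal.ofReal (1 - δ) * ((Fintype.card α : ℕ) : ENNReal)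
        = ENNReal.ofReal ((1 - δ) * ((Fintype.card α : ℕ) : ℝ)) := by
          rw [ENNReal.ofReal_mul h.le, ENNReal.ofReal_natCast]
      _ ≤ ENNReal.ofReal (((Finset.univ.filter P).card : ℕ) : ℝ) :=
          ENNReal.ofReal_le_ofReal hcard
      _ = (((Finset.univ.filter P).card : ℕ) : ENNReal) := ENNReal.ofReal_natCast _

/-- **Guarantee for the Hutchinson Chebyshev moment estimator.**  There is an
absolute constant `C > 0` such that for any symmetric `A ∈ ℝ^{n×n}` with `‖A‖₂ ≤ 1`,
any `N ≥ 1`, `δ ∈ (0,1/2]`, `Δ > 0`, and any integer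
`ℓ ≥ max(1, C·log²(N/δ)/(n·Δ²))`, if `g^{(1)},…,g^{(ℓ)}` are i.i.d. uniform in
`{-1,1}^n` and `τ̃_k = (√(2/π)/(ℓn))·Σ_i (g^{(i)})ᵀ T_k(A) g^{(i)}`, then with
probability at least `1 - δ` we have `|τ̃_k - (1/n)·tr(T̄_k(A))| ≤ Δ` for all
`k = 1,…,N` (here `(1/n)·tr(T̄_k(A)) = (√(2/π)/n)·tr(T_k(A))` for `k ≥ 1`). -/
theorem hutchinson_cheb_moments_guarantee :
    ∃ C : ℝ, 0 < C ∧
      ∀ (n N : ℕ), 0 < n → 0 < N →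
        ∀ A : Matrix (Fin n) (Fin n) ℝ, A.IsSymm →
          (∀ v : Fin n → ℝ, e2norm (A.mulVec v) ≤ e2norm v) →
          ∀ δ Δ : ℝ, δ ∈ Set.Ioc (0 : ℝ) (1 / 2) → 0 < Δ →
            ∀ ℓ : ℕ,
              max 1 (C * Real.log ((N : ℝ) / δ) ^ 2 / ((n : ℝ) * Δ ^ 2)) ≤ (ℓ : ℝ) →
              ENNReal.ofReal (1 - δ) ≤
                (PMF.uniformOfFintype (Fin ℓ → Fin n → Bool)).toMeasure
                  {gs : Fin ℓ → Fin n → Bool |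
                    ∀ k, 1 ≤ k → k ≤ N →
                      |(Real.sqrt (2 / Real.pi) / ((ℓ : ℝ) * (n : ℝ))) *
                          ∑ i, (fun j => radSign (gs i j)) ⬝ᵥ
                            (chebTMat A k).mulVec (fun j => radSign (gs i j)) -
                        (Real.sqrt (2 / Real.pi) / (n : ℝ)) *
                          Matrix.trace (chebTMat A k)| ≤ Δ} := by
  classical
  refine ⟨1000, by norm_num, ?_⟩
  intro n N hn hN A hA hop δ Δ hδ hΔ ℓ hℓ
  obtain ⟨hδ0, hδhalf⟩ := hδ
  have hn' : (0:ℝ) < n := by exact_mod_cast hn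
  have hN' : (1:ℝ) ≤ N := by exact_mod_cast hN
  have hℓ1 : (1:ℝ) ≤ ℓ := le_trans (le_max_left _ _) hℓ
  have hℓ0 : 0 < ℓ := by exact_mod_cast lt_of_lt_of_le zero_lt_one hℓ1
  have hℓ' : (0:ℝ) < ℓ := by exact_mod_cast hℓ0
  -- operator bound in sum-of-squares form
  have hopsq : ∀ v : Fin n → ℝ, ∑ i, (A.mulVec v i)^2 ≤ ∑ i, (v i)^2 := by
    intro v
    have h := hop v
    unfold e2norm at h
    have h1 : (0:ℝ) ≤ ∑ i, (A.mulVec v i)^2 := by positivity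
    have h2 : (0:ℝ) ≤ ∑ i, (v i)^2 := by positivity
    nlinarith [Real.sq_sqrt h1, Real.sq_sqrt h2, Real.sqrt_nonneg (∑ i, (A.mulVec v i)^2),
      Real.sqrt_nonneg (∑ i, (v i)^2)]
  have hMop : ∀ k : ℕ, ∀ v : Fin n → ℝ,
      ∑ i, ((chebTMat A k).mulVec v i)^2 ≤ ∑ i, (v i)^2 :=
    fun k => Spec.cheb_op A hA hopsq k
  have hMsym : ∀ k : ℕ, (chebTMat A k).IsSymm := fun k => Spec.cheb_symm A hA k
  set r : ℝ := Real.sqrt (2 / Real.pi) with hr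
  have hπ : (0:ℝ) < Real.pi := Real.pi_pos
  have hr0 : 0 < r := Real.sqrt_pos.mpr (by positivity)
  have hr2 : r^2 = 2 / Real.pi := Real.sq_sqrt (by positivity)
  set t₀ : ℝ := Δ * ℓ * n / r with ht₀def
  have ht₀ : 0 < t₀ := by positivity
  -- error identity
  have herr : ∀ (k : ℕ) (gs : Fin ℓ → Fin n → Bool),
      (r / ((ℓ : ℝ) * (n : ℝ))) *
          (∑ i, (fun j => radSign (gs i j)) ⬝ᵥ
            (chebTMat A k).mulVec (fun j => radSign (gs i j))) -
        (r / (n : ℝ)) * Matrix.trace (chebTMat A k)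
      = (r / ((ℓ : ℝ) * (n : ℝ))) *
          ((∑ i, (fun j => radSign (gs i j)) ⬝ᵥ
            (chebTMat A k).mulVec (fun j => radSign (gs i j))) -
            (ℓ : ℝ) * Matrix.trace (chebTMat A k)) := by
    intro k gs
    field_simp
  set P : (Fin ℓ → Fin n → Bool) → Prop := fun gs =>
    ∀ k, 1 ≤ k → k ≤ N →
      |(r / ((ℓ : ℝ) * (n : ℝ))) *
          ∑ i, (fun j => radSign (gs i j)) ⬝ᵥ
            (chebTMat A k).mulVec (fun j => radSign (gs i j)) -
        (r / (n : ℝ)) * Matrix.trace (chebTMat A k)| ≤ Δ with hP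
  set Bad : Finset (Fin ℓ → Fin n → Bool) := Finset.univ.filter (fun gs => ¬ P gs) with hBad
  set BadF : ℕ → Finset (Fin ℓ → Fin n → Bool) := fun k =>
    Finset.univ.filter (fun gs =>
      t₀ ≤ |(∑ i, (fun j => radSign (gs i j)) ⬝ᵥ
              (chebTMat A k).mulVec (fun j => radSign (gs i j)))
            - (ℓ : ℝ) * (chebTMat A k).trace|) with hBadF
  have hsub : Bad ⊆ (Finset.Icc 1 N).biUnion BadF := by
    intro gs hgs
    rw [hBad, Finset.mem_filter] at hgs
    have := hgs.2
    simp only [hP] at this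
    push_neg at this
    obtain ⟨k, hk1, hkN, hkgt⟩ := this
    refine Finset.mem_biUnion.mpr ⟨k, Finset.mem_Icc.mpr ⟨hk1, hkN⟩, ?_⟩
    rw [hBadF]
    rw [Finset.mem_filter]
    refine ⟨Finset.mem_univ _, ?_⟩
    by_contra hcon
    push_neg at hcon
    have habs : |(r / ((ℓ : ℝ) * (n : ℝ))) *
          ∑ i, (fun j => radSign (gs i j)) ⬝ᵥ
            (chebTMat A k).mulVec (fun j => radSign (gs i j)) -
        (r / (n : ℝ)) * Matrix.trace (chebTMat A k)|
        = (r / ((ℓ : ℝ) * (n : ℝ))) *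
            |(∑ i, (fun j => radSign (gs i j)) ⬝ᵥ
              (chebTMat A k).mulVec (fun j => radSign (gs i j)))
              - (ℓ : ℝ) * (chebTMat A k).trace| := by
      rw [herr k gs, abs_mul, abs_of_pos (by positivity)]
    have hfin : (r / ((ℓ : ℝ) * (n : ℝ))) * t₀ = Δ := by
      rw [ht₀def]
      field_simp
    have hlt := hkgt
    rw [habs] at hlt
    have : Δ < Δ := by
      calc Δ < (r / ((ℓ : ℝ) * (n : ℝ))) *
            |(∑ i, (fun j => radSign (gs i j)) ⬝ᵥ
              (chebTMat A k).mulVec (fun j => radSign (gs i j)))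
              - (ℓ : ℝ) * (chebTMat A k).trace| := hlt
        _ ≤ (r / ((ℓ : ℝ) * (n : ℝ))) * t₀ :=
            mul_le_mul_of_nonneg_left hcon.le (by positivity)
        _ = Δ := hfin
    exact absurd this (lt_irrefl Δ)
  -- per-k bound
  have hperk : ∀ k : ℕ, ((BadF k).card : ℝ)
      ≤ 2 * 2 ^ (ℓ * n) * Real.exp (-(t₀^2/(128 * ℓ * n))) := by
    intro k
    exact matrix_tail hn hℓ0 (chebTMat A k) (hMsym k) (hMop k) t₀ ht₀.le
  -- log quantities
  set L : ℝ := Real.log ((N : ℝ) / δ) with hL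
  have h2Nδ : (2:ℝ) ≤ (N : ℝ) / δ := by
    rw [le_div_iff₀ hδ0]
    nlinarith
  have hL2 : Real.log 2 ≤ L := Real.log_le_log (by norm_num) h2Nδ
  have hlog2 : (0.6931471803:ℝ) < Real.log 2 := Real.log_two_gt_d9
  have hL0 : 0 < L := lt_of_lt_of_le (by linarith) hL2
  have h1000 : 1000 * L^2 ≤ Δ^2 * ℓ * n := by
    have h := le_trans (le_max_right _ _) hℓ
    rw [div_le_iff₀ (by positivity)] at h
    nlinarith
  have hbeta : t₀^2/(128 * ℓ * n) = Real.pi * (Δ^2 * ℓ * n) / 256 := by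
    rw [ht₀def, div_pow, hr2]
    field_simp
    ring
  have h3L : 3 * L ≤ Real.pi * (Δ^2 * ℓ * n) / 256 := by
    have hX0 : (0:ℝ) ≤ Δ^2 * ℓ * n := by positivity
    have c1 : 3 * (Δ^2 * ℓ * n) / 256 ≤ Real.pi * (Δ^2 * ℓ * n) / 256 := by
      nlinarith [Real.pi_gt_three]
    have c2 : 3 * (1000 * L^2) ≤ 3 * (Δ^2 * ℓ * n) := by linarith
    have c3 : 3 * L ≤ 3 * 1000 * L^2 / 256 := by
      nlinarith [mul_le_mul_of_nonneg_left hL2 hL0.le,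
        mul_le_mul_of_nonneg_left hlog2.le hL0.le]
    linarith
  have hexp : Real.exp (-(t₀^2/(128 * ℓ * n))) ≤ (δ / N)^3 := by
    rw [hbeta]
    have he1 : Real.exp (-(3 * L)) = (δ / N)^3 := by
      have hδN : (0:ℝ) < δ / N := by positivity
      have : -(3 * L) = Real.log ((δ / N)^3) := by
        rw [Real.log_pow, hL]
        push_cast
        rw [show ((N:ℝ) / δ) = (δ / N)⁻¹ by rw [inv_div], Real.log_inv]
        ring
      rw [this, Real.exp_log (by positivity)]
    calc Real.exp (-(Real.pi * (Δ^2 * ℓ * n) / 256)) ≤ Real.exp (-(3 * L)) := by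
          apply Real.exp_le_exp.mpr
          linarith
      _ = (δ / N)^3 := he1
  -- total bad count
  have hBadcard : (Bad.card : ℝ) ≤ δ * 2 ^ (ℓ * n) := by
    have hc1 : (Bad.card : ℝ) ≤ ∑ k ∈ Finset.Icc 1 N, ((BadF k).card : ℝ) := by
      have := Finset.card_le_card hsub
      have h2 := le_trans this (Finset.card_biUnion_le)
      exact_mod_cast h2
    have hc2 : ∑ k ∈ Finset.Icc 1 N, ((BadF k).card : ℝ)
        ≤ N * (2 * 2 ^ (ℓ * n) * (δ / N)^3) := by
      calc ∑ k ∈ Finset.Icc 1 N, ((BadF k).card : ℝ)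
          ≤ ∑ _k ∈ Finset.Icc 1 N, 2 * 2 ^ (ℓ * n) * (δ / N)^3 := by
            refine Finset.sum_le_sum (fun k _ => ?_)
            calc ((BadF k).card : ℝ) ≤ 2 * 2 ^ (ℓ * n) * Real.exp (-(t₀^2/(128 * ℓ * n))) :=
                  hperk k
              _ ≤ 2 * 2 ^ (ℓ * n) * (δ / N)^3 :=
                  mul_le_mul_of_nonneg_left hexp (by positivity)
        _ = N * (2 * 2 ^ (ℓ * n) * (δ / N)^3) := by
            rw [Finset.sum_const, Nat.card_Icc, nsmul_eq_mul]
            have hNc : N + 1 - 1 = N := by omega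
            rw [hNc]
    have hc3 : (N : ℝ) * (2 * 2 ^ (ℓ * n) * (δ / N)^3) ≤ δ * 2 ^ (ℓ * n) := by
      rw [div_pow]
      have hN3 : (0:ℝ) < (N:ℝ)^3 := by positivity
      have key : (N : ℝ) * (2 * δ^3 / N^3) ≤ δ := by
        rw [mul_comm, div_mul_eq_mul_div, div_le_iff₀ hN3]
        have h1 : (0:ℝ) ≤ (N:ℝ)^2 - 2*δ^2 := by nlinarith
        nlinarith [mul_nonneg (mul_nonneg hδ0.le (show (0:ℝ) ≤ (N:ℝ) by linarith)) h1]
      calc (N : ℝ) * (2 * 2 ^ (ℓ * n) * (δ^3 / N^3))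
          = ((N : ℝ) * (2 * δ^3 / N^3)) * 2 ^ (ℓ * n) := by ring
        _ ≤ δ * 2 ^ (ℓ * n) := by
            refine mul_le_mul_of_nonneg_right key (by positivity)
    linarith
  -- good count
  set Good : Finset (Fin ℓ → Fin n → Bool) := Finset.univ.filter P with hGood
  have hD : (Fintype.card (Fin ℓ → Fin n → Bool)) = 2^(ℓ*n) := by
    rw [Fintype.card_fun, Fintype.card_fun, Fintype.card_bool, Fintype.card_fin,
      Fintype.card_fin, ← pow_mul, Nat.mul_comm]
  have hsplit : Good.card + Bad.card = 2^(ℓ*n) := by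
    rw [hGood, hBad, Finset.card_filter_add_card_filter_not, Finset.card_univ, hD]
  have hGoodcard : ((1:ℝ) - δ) * 2^(ℓ*n) ≤ Good.card := by
    have : (Good.card : ℝ) + Bad.card = 2^(ℓ*n) := by
      exact_mod_cast congrArg (Nat.cast : ℕ → ℝ) hsplit
    push_cast at this
    linarith
  -- measure computation
  have hmeas : ∀ s : Set (Fin ℓ → Fin n → Bool), MeasurableSet s := by
    intro s
    have hsing : ∀ f : Fin ℓ → Fin n → Bool, MeasurableSet ({f} : Set (Fin ℓ → Fin n → Bool)) := by
      intro f
      have heq : ({f} : Set (Fin ℓ → Fin n → Bool))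
          = ⋂ i, ⋂ j, {g : Fin ℓ → Fin n → Bool | g i j = f i j} := by
        ext g
        simp [funext_iff]
      rw [heq]
      refine MeasurableSet.iInter (fun i => MeasurableSet.iInter (fun j => ?_))
      have hm : Measurable (fun g : Fin ℓ → Fin n → Bool => g i j) :=
        (measurable_pi_apply j).comp (measurable_pi_apply i)
      exact hm (MeasurableSet.singleton (f i j))
    have heq2 : s = ⋃ f ∈ s, {f} := by simp
    rw [heq2]
    exact MeasurableSet.biUnion (Set.to_countable s) (fun f _ => hsing f)
  refine final_measure hmeas P δ ?_
  have hfil : (Finset.univ.filter P) = Good := rfl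
  rw [hfil]
  have hDr : ((Fintype.card (Fin ℓ → Fin n → Bool) : ℕ) : ℝ) = ((2:ℝ))^(ℓ*n) := by
    rw [hD]
    push_cast
    ring
  rw [hDr]
  exact hGoodcard
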